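/- arXiv:1401.1053 — 3 statements merged into one kernel-verified Lean document; each statement's English description precedes it below -/
import Mathlib

section
/- The type family Stream of streams, with counit := head and cobind := sredec (the cosubstitution operation on streams defined corecursively by head(sredec f t) = f t and tail(sredec f t) = sredec f (tail t)), forms a comonad relative to the functor eq : Set → Setoid, where Stream A is taken as a setoid under bisimilarity. -/
/-- A relation on streams is a bisimulation if related streams have equal heads and
related tails. -/
def IsBisim {A : Type} (R : Stream' A → Stream' A → Prop) : Prop :=
  ∀ s t, R s t → s.head = t.head ∧ R s.tail t.tail

/-- Bisimilarity: the greatest bisimulation. -/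
def Bisim {A : Type} (s t : Stream' A) : Prop :=
  ∃ R, IsBisim R ∧ R s t

theorem Bisim.head_eq {A : Type} {s t : Stream' A} (h : Bisim s t) : s.head = t.head := by
  obtain ⟨R, hR, hst⟩ := h; exact (hR s t hst).1

theorem Bisim.tail {A : Type} {s t : Stream' A} (h : Bisim s t) : Bisim s.tail t.tail := by
  obtain ⟨R, hR, hst⟩ := h; exact ⟨R, hR, (hR s t hst).2⟩

theorem Bisim.refl {A : Type} (s : Stream' A) : Bisim s s :=
  ⟨Eq, fun _ _ h => by subst h; exact ⟨rfl, rfl⟩, rfl⟩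

theorem Bisim.symm {A : Type} {s t : Stream' A} (h : Bisim s t) : Bisim t s :=
  ⟨fun a b => Bisim b a, fun _ _ hba => ⟨hba.head_eq.symm, hba.tail⟩, h⟩

theorem Bisim.trans {A : Type} {s t u : Stream' A} (h1 : Bisim s t) (h2 : Bisim t u) :
    Bisim s u :=
  ⟨fun a c => ∃ b, Bisim a b ∧ Bisim b c,
   fun _ _ ⟨b, hab, hbc⟩ => ⟨hab.head_eq.trans hbc.head_eq, b.tail, hab.tail, hbc.tail⟩,
   t, h1, h2⟩

theorem Bisim.eq_ext {A : Type} {s t : Stream' A} (h : ∀ n, s.get n = t.get n) : Bisim s t :=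
  ⟨fun a b => ∀ n, a.get n = b.get n,
   fun a b hab => ⟨hab 0, fun n => hab (n+1)⟩, h⟩

theorem stream_relative_comonad
    (sredec : ∀ {A B : Type}, (Stream' A → B) → Stream' A → Stream' B)
    (hhead : ∀ {A B : Type} (f : Stream' A → B) (t : Stream' A),
      (sredec f t).head = f t)
    (htail : ∀ {A B : Type} (f : Stream' A → B) (t : Stream' A),
      (sredec f t).tail = sredec f t.tail) :
    -- Stream A is a setoid under bisimilarity
    (∀ A : Type, Equivalence (@Bisim A)) ∧
    -- the counit head is a setoid morphism into eq A
    (∀ (A : Type) (s t : Stream' A), Bisim s t → s.head = t.head) ∧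
    -- cobind sends setoid morphisms to setoid morphisms
    (∀ (A B : Type) (f : Stream' A → B), (∀ s t, Bisim s t → f s = f t) →
      ∀ s t, Bisim s t → Bisim (sredec f s) (sredec f t)) ∧
    -- cobind respects the hom-setoids
    (∀ (A B : Type) (f g : Stream' A → B), (∀ t, f t = g t) →
      ∀ t, Bisim (sredec f t) (sredec g t)) ∧
    -- first comonad law: cobind f followed by counit equals f
    (∀ (A B : Type) (f : Stream' A → B) (t : Stream' A), (sredec f t).head = f t) ∧
    -- second comonad law: cobind of the counit is the identity
    (∀ (A : Type) (t : Stream' A), Bisim (sredec Stream'.head t) t) ∧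
    -- third comonad law: associativity of cosubstitution
    (∀ (A B C : Type) (f : Stream' A → B) (g : Stream' B → C) (t : Stream' A),
      Bisim (sredec g (sredec f t)) (sredec (fun x => g (sredec f x)) t)) := by
  refine ⟨fun A => ⟨Bisim.refl, Bisim.symm, Bisim.trans⟩,
    fun A s t h => h.head_eq, ?_, ?_, fun A B f t => hhead f t, ?_, ?_⟩
  · intro A B f hf s t h
    refine ⟨fun a b => ∃ s t, Bisim s t ∧ a = sredec f s ∧ b = sredec f t,
      ?_, s, t, h, rfl, rfl⟩
    rintro a b ⟨s, t, h, rfl, rfl⟩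
    exact ⟨by rw [hhead, hhead, hf s t h],
      by rw [htail, htail]; exact ⟨s.tail, t.tail, h.tail, rfl, rfl⟩⟩
  · intro A B f g hfg t
    refine ⟨fun a b => ∃ t, a = sredec f t ∧ b = sredec g t, ?_, t, rfl, rfl⟩
    rintro a b ⟨t, rfl, rfl⟩
    exact ⟨by rw [hhead, hhead, hfg], by rw [htail, htail]; exact ⟨t.tail, rfl, rfl⟩⟩
  · intro A t
    refine ⟨fun a b => a = sredec Stream'.head b, ?_, rfl⟩
    rintro a b rfl
    exact ⟨hhead _ _, by rw [htail]⟩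
  · intro A B C f g t
    refine ⟨fun a b => ∃ t, a = sredec g (sredec f t) ∧
      b = sredec (fun x => g (sredec f x)) t, ?_, t, rfl, rfl⟩
    rintro a b ⟨t, rfl, rfl⟩
    exact ⟨by rw [hhead, hhead], by rw [htail, htail, htail]; exact ⟨t.tail, rfl, rfl⟩⟩
end

section
/- Given a morphism τ : T → S of relative comonads over F and a comodule M over T towards E, the pushforward τ*M defined by (τ*M)(A) := MA and mcobind^{τ*M}(f) := mcobind^M(f ∘ τ_A) for f : D(SA, FB) is a comodule over S. -/
open CategoryTheory

/-- A comonad relative to a functor `F : C ⥤ D`. -/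
structure RelComonad {C : Type*} [Category C] {D : Type*} [Category D] (F : C ⥤ D) where
  obj : C → D
  counit : ∀ A : C, obj A ⟶ F.obj A
  cobind : ∀ {A B : C}, (obj A ⟶ F.obj B) → (obj A ⟶ obj B)
  cobind_counit : ∀ {A B : C} (f : obj A ⟶ F.obj B), cobind f ≫ counit B = f
  cobind_counit_id : ∀ A : C, cobind (counit A) = 𝟙 (obj A)
  cobind_cobind : ∀ {A B C' : C} (f : obj A ⟶ F.obj B) (g : obj B ⟶ F.obj C'),
      cobind f ≫ cobind g = cobind (cobind f ≫ g)

/-- Morphisms of relative comonads. -/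
structure RelComonadHom {C : Type*} [Category C] {D : Type*} [Category D] {F : C ⥤ D}
    (T S : RelComonad F) where
  app : ∀ A : C, T.obj A ⟶ S.obj A
  counit_eq : ∀ A : C, T.counit A = app A ≫ S.counit A
  cobind_eq : ∀ {A B : C} (f : S.obj A ⟶ F.obj B),
      T.cobind (app A ≫ f) ≫ app B = app A ≫ S.cobind f
/-- A comodule over a relative comonad `T` (over `F : C ⥤ D`) towards a category `E`. -/
structure Comodule {C : Type*} [Category C] {D : Type*} [Category D] {F : C ⥤ D}
    (T : RelComonad F) (E : Type*) [Category E] where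
  obj : C → E
  mcobind : ∀ {A B : C}, (T.obj A ⟶ F.obj B) → (obj A ⟶ obj B)
  mcobind_counit : ∀ A : C, mcobind (T.counit A) = 𝟙 (obj A)
  mcobind_mcobind : ∀ {A B C' : C} (f : T.obj A ⟶ F.obj B) (g : T.obj B ⟶ F.obj C'),
      mcobind f ≫ mcobind g = mcobind (T.cobind f ≫ g)

/-- given a morphism `τ : T → S` of relative comonads over `F` and a
comodule `M` over `T` towards `E`, the pushforward data
`(τ*M)(A) := M A`, `mcobind^{τ*M}(f) := mcobind^M(f ∘ τ_A)` satisfies the comodule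
laws over `S`. -/
theorem pushforward_comodule {C : Type*} [Category C] {D : Type*} [Category D]
    {E : Type*} [Category E] {F : C ⥤ D} {T S : RelComonad F}
    (τ : RelComonadHom T S) (M : Comodule T E) :
    (∀ A : C, M.mcobind (τ.app A ≫ S.counit A) = 𝟙 (M.obj A)) ∧
    (∀ (A B C' : C) (f : S.obj A ⟶ F.obj B) (g : S.obj B ⟶ F.obj C'),
      M.mcobind (τ.app A ≫ f) ≫ M.mcobind (τ.app B ≫ g) =
        M.mcobind (τ.app A ≫ S.cobind f ≫ g)) := by
  constructor
  · intro A
    rw [← τ.counit_eq, M.mcobind_counit]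
  · intro A B C' f g
    rw [M.mcobind_mcobind]
    congr 1
    rw [← Category.assoc, τ.cobind_eq, Category.assoc]
end

section
/- Any comonad T relative to a strong monoidal functor F : C → D between cartesian monoidal categories can be equipped with a canonical cut operation relative to a fixed object E : C₀, given by ccut_A := lift^T(pr₂(E,A)) : T(E×A) → TA, and this operation satisfies the two laws of a relative comonad with cut. -/
open CategoryTheory Limits

/-- The functorial action of a relative comonad. -/
def RelComonad.lift {C : Type*} [Category C] {D : Type*} [Category D] {F : C ⥤ D}
    (T : RelComonad F) {A B : C} (f : A ⟶ B) : T.obj A ⟶ T.obj B :=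
  T.cobind (T.counit A ≫ F.map f)


variable {C : Type*} [Category C] {D : Type*} [Category D]
  [Limits.HasBinaryProducts C] [Limits.HasBinaryProducts D]

/-- The canonical comparison map `F(A × B) ⟶ F A × F B`; `F` being strong monoidal
means that this map is an isomorphism. -/
noncomputable def phiF (F : C ⥤ D) (A B : C) : F.obj (A ⨯ B) ⟶ F.obj A ⨯ F.obj B :=
  prod.lift (F.map prod.fst) (F.map prod.snd)

/-- The canonical cut operation on a relative comonad: `ccut_A := lift(pr₂)`. -/
noncomputable def ccut {F : C ⥤ D} (T : RelComonad F) (E A : C) : T.obj (E ⨯ A) ⟶ T.obj A :=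
  T.lift (prod.snd : E ⨯ A ⟶ A)

/-- The `extend` operation associated to a cut operation:
`extend f := φ⁻¹ ∘ (counit_E × f) ∘ ⟨T(pr₁), cut⟩`. -/
noncomputable def extendC {F : C ⥤ D} [∀ A B : C, IsIso (phiF F A B)] (T : RelComonad F)
    (E : C) {A B : C} (f : T.obj A ⟶ F.obj B) :
    T.obj (E ⨯ A) ⟶ F.obj (E ⨯ B) :=
  prod.lift (T.lift (prod.fst : E ⨯ A ⟶ E) ≫ T.counit E) (ccut T E A ≫ f) ≫
    inv (phiF F E B)

/-- any comonad `T` relative to a strong monoidal functor `F` between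
cartesian monoidal categories can be equipped with a canonical cut operation relative
to a fixed object `E`, namely `ccut_A := lift(pr₂)`, and this operation satisfies the
two laws of a relative comonad with cut. -/
theorem canonical_cut_laws (F : C ⥤ D) [∀ A B : C, IsIso (phiF F A B)]
    (T : RelComonad F) (E : C) :
    (∀ A : C, ccut T E A ≫ T.counit A = T.lift (prod.snd : E ⨯ A ⟶ A) ≫ T.counit A) ∧
    (∀ (A B : C) (f : T.obj A ⟶ F.obj B),
      ccut T E A ≫ T.cobind f = T.cobind (extendC T E f) ≫ ccut T E B) := by
  refine ⟨fun A => rfl, fun A B f => ?_⟩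
  have key : extendC T E f ≫ F.map (prod.snd : E ⨯ B ⟶ B) = ccut T E A ≫ f := by
    have h : inv (phiF F E B) ≫ F.map (prod.snd : E ⨯ B ⟶ B)
        = (prod.snd : F.obj E ⨯ F.obj B ⟶ F.obj B) := by
      rw [IsIso.inv_comp_eq]; simp [phiF]; exact (prod.lift_snd _ _).symm
    simp [extendC, Category.assoc, h]; exact prod.lift_snd _ _
  calc ccut T E A ≫ T.cobind f
      = T.cobind (ccut T E A ≫ f) := by
        unfold ccut RelComonad.lift
        rw [T.cobind_cobind]
    _ = T.cobind (extendC T E f) ≫ ccut T E B := by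
        unfold ccut RelComonad.lift
        rw [T.cobind_cobind, ← Category.assoc, T.cobind_counit, key]
        rfl
end
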